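/- Let ω ∈ ℂ with Re ω > 0, c > 0, and f : (0,∞) → ℂ continuous with compact support. Define u(y) = ∫₀^∞ k(y,s) f(s) ds − e^{−ω y/√c} b, where k(y,s) = (1/(2ω√c))(e^{−ω|y−s|/√c} − e^{−ω(y+s)/√c}) and b ∈ ℂ. Then u'(0) = (1/c) ∫₀^∞ e^{−ω s/√c} f(s) ds + (ω/√c) b. -/

import Mathlib

open Real MeasureTheory

noncomputable def greenK (ω : ℂ) (c : ℝ) (y s : ℝ) : ℂ :=
  (1 / (2 * ω * (Real.sqrt c : ℂ))) *
    (Complex.exp (-ω * (|y - s| : ℝ) / (Real.sqrt c : ℂ))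
      - Complex.exp (-ω * ((y + s : ℝ) : ℂ) / (Real.sqrt c : ℂ)))

/-- Boundary derivative formula: for `u(y) = ∫₀^∞ k(y,s) f(s) ds − e^{−ωy/√c} b` one has
`u'(0) = (1/c)∫₀^∞ e^{−ωs/√c} f(s) ds + (ω/√c) b`. -/
theorem stmt7 (ω : ℂ) (hω : 0 < ω.re) (c : ℝ) (hc : 0 < c) (b : ℂ)
    (f : ℝ → ℂ) (hf : Continuous f) (hsupp : HasCompactSupport f)
    (hsupp0 : tsupport f ⊆ Set.Ioi (0 : ℝ)) :
    deriv (fun y : ℝ =>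
        (∫ s in Set.Ioi (0 : ℝ), greenK ω c y s * f s)
          - Complex.exp (-ω * (y : ℂ) / (Real.sqrt c : ℂ)) * b) 0
      = (1 / (c : ℂ)) * (∫ s in Set.Ioi (0 : ℝ),
          Complex.exp (-ω * (s : ℂ) / (Real.sqrt c : ℂ)) * f s)
        + (ω / (Real.sqrt c : ℂ)) * b := by
  have hω0 : ω ≠ 0 := fun h => by simp [h] at hω
  have hscR : Real.sqrt c ≠ 0 := ne_of_gt (Real.sqrt_pos.mpr hc)
  have hsc : ((Real.sqrt c : ℝ) : ℂ) ≠ 0 := by exact_mod_cast hscR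
  have hcc : ((Real.sqrt c : ℝ) : ℂ) * ((Real.sqrt c : ℝ) : ℂ) = (c : ℂ) := by
    rw [← Complex.ofReal_mul, Real.mul_self_sqrt hc.le]
  obtain ⟨ε, hεpos, hK⟩ : ∃ ε > 0, tsupport f ⊆ Set.Ici ε := by
    rcases (tsupport f).eq_empty_or_nonempty with h | h
    · exact ⟨1, one_pos, by simp [h]⟩
    · obtain ⟨x, hxK, hlb⟩ := hsupp.exists_isLeast h
      exact ⟨x, hsupp0 hxK, fun s hs => hlb hs⟩
  set I : ℂ := ∫ s in Set.Ioi (0 : ℝ),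
      Complex.exp (-ω * (s : ℂ) / (Real.sqrt c : ℂ)) * f s with hI
  have hpt : ∀ y ∈ Set.Ioo (-ε) ε, ∀ s : ℝ,
      greenK ω c y s * f s
        = ((1 / (2 * ω * (Real.sqrt c : ℂ))) *
            (Complex.exp (ω * (y : ℂ) / (Real.sqrt c : ℂ))
              - Complex.exp (-ω * (y : ℂ) / (Real.sqrt c : ℂ)))) *
          (Complex.exp (-ω * (s : ℂ) / (Real.sqrt c : ℂ)) * f s) := by
    intro y hy s
    by_cases hfs : f s = 0
    · simp [hfs]
    · have hs : ε ≤ s := hK (subset_tsupport f (by simpa [Function.mem_support] using hfs))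
      have habs : |y - s| = s - y := by
        rw [abs_sub_comm]; exact abs_of_nonneg (by linarith [hy.2])
      unfold greenK
      rw [habs]
      rw [show (-ω * ((s - y : ℝ) : ℂ) / (Real.sqrt c : ℂ))
            = ω * (y : ℂ) / (Real.sqrt c : ℂ) + (-ω * (s : ℂ) / (Real.sqrt c : ℂ)) by
          push_cast; ring]
      rw [show (-ω * ((y + s : ℝ) : ℂ) / (Real.sqrt c : ℂ))
            = -ω * (y : ℂ) / (Real.sqrt c : ℂ) + (-ω * (s : ℂ) / (Real.sqrt c : ℂ)) by
          push_cast; ring]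
      rw [Complex.exp_add, Complex.exp_add]
      ring
  have hEq : (fun y : ℝ =>
        (∫ s in Set.Ioi (0 : ℝ), greenK ω c y s * f s)
          - Complex.exp (-ω * (y : ℂ) / (Real.sqrt c : ℂ)) * b)
      =ᶠ[nhds (0 : ℝ)] (fun y : ℝ =>
        (1 / (2 * ω * (Real.sqrt c : ℂ))) *
            (Complex.exp (ω * (y : ℂ) / (Real.sqrt c : ℂ))
              - Complex.exp (-ω * (y : ℂ) / (Real.sqrt c : ℂ))) * I
          - Complex.exp (-ω * (y : ℂ) / (Real.sqrt c : ℂ)) * b) := by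
    filter_upwards [Ioo_mem_nhds (neg_neg_iff_pos.mpr hεpos) hεpos] with y hy
    have hint : (∫ s in Set.Ioi (0 : ℝ), greenK ω c y s * f s)
        = ∫ s in Set.Ioi (0 : ℝ),
            ((1 / (2 * ω * (Real.sqrt c : ℂ))) *
              (Complex.exp (ω * (y : ℂ) / (Real.sqrt c : ℂ))
                - Complex.exp (-ω * (y : ℂ) / (Real.sqrt c : ℂ)))) *
            (Complex.exp (-ω * (s : ℂ) / (Real.sqrt c : ℂ)) * f s) :=
      integral_congr_ae (Filter.Eventually.of_forall fun s => hpt y hy s)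
    rw [hint, MeasureTheory.integral_const_mul, ← hI]
  rw [hEq.deriv_eq]
  have h1 : HasDerivAt (fun y : ℝ => (y : ℂ)) 1 0 := by
    simpa using (hasDerivAt_id (0 : ℝ)).ofReal_comp
  have hA : HasDerivAt (fun y : ℝ => Complex.exp (ω * (y : ℂ) / (Real.sqrt c : ℂ)))
      (ω / (Real.sqrt c : ℂ)) 0 := by
    have := ((h1.const_mul ω).div_const ((Real.sqrt c : ℝ) : ℂ)).cexp
    simpa using this
  have hB : HasDerivAt (fun y : ℝ => Complex.exp (-ω * (y : ℂ) / (Real.sqrt c : ℂ)))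
      (-ω / (Real.sqrt c : ℂ)) 0 := by
    have := ((h1.const_mul (-ω)).div_const ((Real.sqrt c : ℝ) : ℂ)).cexp
    simpa using this
  have hg : HasDerivAt (fun y : ℝ =>
        (1 / (2 * ω * (Real.sqrt c : ℂ))) *
            (Complex.exp (ω * (y : ℂ) / (Real.sqrt c : ℂ))
              - Complex.exp (-ω * (y : ℂ) / (Real.sqrt c : ℂ))) * I
          - Complex.exp (-ω * (y : ℂ) / (Real.sqrt c : ℂ)) * b)
      ((1 / (2 * ω * (Real.sqrt c : ℂ))) *
          (ω / (Real.sqrt c : ℂ) - -ω / (Real.sqrt c : ℂ)) * I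
        - (-ω / (Real.sqrt c : ℂ)) * b) 0 :=
    (((hA.sub hB).const_mul (1 / (2 * ω * (Real.sqrt c : ℂ)))).mul_const I).sub
      (hB.mul_const b)
  have e1 : (1 / (2 * ω * ((Real.sqrt c : ℝ) : ℂ)) *
      (ω / ((Real.sqrt c : ℝ) : ℂ) - -ω / ((Real.sqrt c : ℝ) : ℂ)))
      = 1 / (((Real.sqrt c : ℝ) : ℂ) * ((Real.sqrt c : ℝ) : ℂ)) := by
    field_simp
    ring
  rw [hg.deriv, e1, hcc]
  ring
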